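/- If the sequence ξ = (ξ₁, ξ₂, …) is stationary, ∫_E ψ d(ℙ∘ξ₁^{-1}) < ∞, and additionally ξ is ergodic (i.e. ℙ{ξ ∈ I} ∈ {0,1} for every I in the shift-invariant σ-algebra ℐ), then ℙ-almost surely the empirical measures m_n converge to μ = ℙ∘ξ₁^{-1} in the ψ-weak topology, as n → ∞. -/

import Mathlib

open MeasureTheory Filter Topology
open scoped ENNReal NNReal

/-- The empirical measure `m_{n+1}(ω) = (n+1)⁻¹ ∑_{i=0}^{n} δ_{ω i}` of the first `n+1`
observations (coordinates) of the sequence `ω : ℕ → E`. -/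
noncomputable def empMeasure (E : Type*) [MeasurableSpace E] (n : ℕ) (ω : ℕ → E) :
    MeasureTheory.Measure E :=
  ((n : ℝ≥0∞) + 1)⁻¹ • ∑ i ∈ Finset.range (n + 1), MeasureTheory.Measure.dirac (ω i)

/-- The empirical measure as a probability measure. -/
noncomputable def empirical (E : Type*) [MeasurableSpace E] (n : ℕ) (ω : ℕ → E) :
    MeasureTheory.ProbabilityMeasure E :=
  ⟨empMeasure E n ω, by
    constructor
    simp [empMeasure, Measure.smul_apply, Finset.sum_apply]
    rw [ENNReal.inv_mul_cancel] <;> simp⟩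

/-- The shift operator `Σ(x₁,x₂,…) = (x₂,x₃,…)` on `E^ℕ`. -/
def shift {E : Type*} (ω : ℕ → E) : ℕ → E := fun n => ω (n + 1)

/-- The shift-invariant σ-algebra `ℐ = {I ∈ ℰ^ℕ : Σ⁻¹(I) = I}` on `E^ℕ` (identified, via the
coordinate process `ξ`, with `ξ⁻¹ℐ`). -/
def shiftInvariantSigma (E : Type*) [MeasurableSpace E] : MeasurableSpace (ℕ → E) where
  MeasurableSet' I := MeasurableSet I ∧ shift ⁻¹' I = I
  measurableSet_empty := ⟨MeasurableSet.empty, by simp⟩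
  measurableSet_compl := fun s hs => ⟨hs.1.compl, by rw [Set.preimage_compl, hs.2]⟩
  measurableSet_iUnion := fun s hs =>
    ⟨MeasurableSet.iUnion fun i => (hs i).1, by simp [Set.preimage_iUnion, fun i => (hs i).2]⟩

/-- The one-sided Prohorov distance
`π(μ,ν) = inf {ε > 0 : μ(B) ≤ ν(Bᵉ) + ε for every Borel set B}`. -/
noncomputable def prohorovDist {E : Type*} [PseudoMetricSpace E] [MeasurableSpace E]
    (μ ν : MeasureTheory.Measure E) : ℝ :=
  sInf {ε : ℝ | 0 < ε ∧ ∀ B : Set E, MeasurableSet B →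
    μ B ≤ ν (Metric.thickening ε B) + ENNReal.ofReal ε}

/-- The distance `d_ψ(μ,ν) = π(μ,ν) + |∫ψ dμ − ∫ψ dν|`. -/
noncomputable def dPsi {E : Type*} [PseudoMetricSpace E] [MeasurableSpace E] (ψ : E → ℝ)
    (μ ν : MeasureTheory.Measure E) : ℝ :=
  prohorovDist μ ν + |(∫ x, ψ x ∂μ) - ∫ x, ψ x ∂ν|


section Birkhoff

variable {α : Type*} [MeasurableSpace α] {μ : Measure α} [IsProbabilityMeasure μ]
  {T : α → α} {f : α → ℝ}

/-- `maxSum T f N x = max_{1 ≤ n ≤ N+1} (birkhoffSum T f n x)`, defined recursively. -/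
noncomputable def maxSum (T : α → α) (f : α → ℝ) : ℕ → α → ℝ
  | 0 => f
  | (N + 1) => fun x => f x + max 0 (maxSum T f N (T x))

lemma maxSum_measurable (hT : Measurable T) (hf : Measurable f) (N : ℕ) :
    Measurable (maxSum T f N) := by
  induction N with
  | zero => exact hf
  | succ N ih => exact hf.add (measurable_const.max (ih.comp hT))

lemma maxSum_integrable (hT : MeasurePreserving T μ μ) (hf : Measurable f)
    (hfi : Integrable f μ) (N : ℕ) : Integrable (maxSum T f N) μ := by
  induction N with
  | zero => exact hfi
  | succ N ih =>
    exact hfi.add ((integrable_const (0:ℝ)).sup ((hT.integrable_comp (maxSum_measurable hT.measurable hf N).aestronglyMeasurable).2 ih))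

lemma maxSum_mono (N : ℕ) (x : α) : maxSum T f N x ≤ maxSum T f (N + 1) x := by
  induction N generalizing x with
  | zero => simpa [maxSum] using le_max_of_le_right (le_max_left _ _)
  | succ N ih =>
    simp only [maxSum]
    exact add_le_add_right (max_le_max le_rfl (ih (T x))) _

lemma maxSum_le (N : ℕ) (x : α) : ∃ n, 0 < n ∧ maxSum T f N x ≤ birkhoffSum T f n x := by
  induction N generalizing x with
  | zero => exact ⟨1, one_pos, by simp [maxSum, birkhoffSum_one]⟩
  | succ N ih =>
    rcases le_total (maxSum T f N (T x)) 0 with h | h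
    · exact ⟨1, one_pos, by simp [maxSum, birkhoffSum_one, max_eq_left h]⟩
    · obtain ⟨n, hn, hle⟩ := ih (T x)
      refine ⟨n + 1, n.succ_pos, ?_⟩
      rw [birkhoffSum_succ']
      simp only [maxSum, max_eq_right h]
      exact add_le_add_right hle _

lemma le_maxSum (n : ℕ) (x : α) : birkhoffSum T f (n + 1) x ≤ maxSum T f n x := by
  induction n generalizing x with
  | zero => simp [maxSum, birkhoffSum_one]
  | succ n ih =>
    rw [birkhoffSum_succ']
    exact add_le_add_right ((ih (T x)).trans (le_max_right 0 _)) _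

/-- The maximal ergodic theorem (Garsia's proof). -/
lemma maximal_ergodic (hT : MeasurePreserving T μ μ) (hf : Measurable f)
    (hfi : Integrable f μ) :
    0 ≤ ∫ x in {x | ∃ n, 0 < birkhoffSum T f n x}, f x ∂μ := by
  set G : Set α := {x | ∃ n, 0 < birkhoffSum T f n x} with hG
  set s : ℕ → Set α := fun N => {x | 0 < maxSum T f N x} with hs
  have hsmeas : ∀ N, MeasurableSet (s N) :=
    fun N => measurableSet_lt measurable_const (maxSum_measurable hT.measurable hf N)
  have hsmono : Monotone s := by
    apply monotone_nat_of_le_succ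
    intro N x hx
    exact lt_of_lt_of_le hx (maxSum_mono N x)
  have hGs : G = ⋃ N, s N := by
    ext x
    constructor
    · rintro ⟨n, hn⟩
      rcases n with - | n
      · simp [birkhoffSum_zero] at hn
      · exact Set.mem_iUnion.2 ⟨n, lt_of_lt_of_le hn (le_maxSum n x)⟩
    · intro hx
      obtain ⟨N, hN⟩ := Set.mem_iUnion.1 hx
      obtain ⟨n, -, hle⟩ := maxSum_le N x
      exact ⟨n, lt_of_lt_of_le hN hle⟩
  -- the integral over each s N is nonnegative
  have key : ∀ N, 0 ≤ ∫ x in s N, f x ∂μ := by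
    intro N
    set P : α → ℝ := fun x => max 0 (maxSum T f N x) with hP
    have hPmeas : Measurable P := measurable_const.max (maxSum_measurable hT.measurable hf N)
    have hPint : Integrable P μ :=
      (integrable_const (0:ℝ)).sup (maxSum_integrable hT hf hfi N)
    have hPTint : Integrable (fun x => P (T x)) μ := (hT.integrable_comp hPmeas.aestronglyMeasurable).2 hPint
    -- pointwise: on s N, P x - P (T x) ≤ f x
    have hpoint : ∀ x ∈ s N, P x - P (T x) ≤ f x := by
      intro x hx
      have h1 : P x = maxSum T f N x := max_eq_right (le_of_lt hx)
      have h2 : maxSum T f N x ≤ f x + P (T x) := by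
        rcases N with - | N
        · calc maxSum T f 0 x = f x := rfl
          _ ≤ f x + P (T x) := le_add_of_nonneg_right (le_max_left 0 _)
        · calc maxSum T f (N + 1) x = f x + max 0 (maxSum T f N (T x)) := rfl
          _ ≤ f x + P (T x) :=
            add_le_add_right (max_le_max le_rfl (maxSum_mono N (T x))) _
      rw [h1]
      linarith
    have step1 : ∫ x in s N, (P x - P (T x)) ∂μ ≤ ∫ x in s N, f x ∂μ :=
      setIntegral_mono_on (hPint.sub hPTint).integrableOn hfi.integrableOn (hsmeas N) hpoint
    have step2 : ∫ x in s N, P x ∂μ = ∫ x, P x ∂μ := by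
      rw [← integral_indicator (hsmeas N)]
      congr 1
      ext x
      by_cases hx : x ∈ s N
      · simp [Set.indicator_of_mem hx]
      · have : maxSum T f N x ≤ 0 := le_of_not_gt (by simpa [hs] using hx)
        simp [Set.indicator_of_notMem hx, hP, max_eq_left this]
    have step3 : ∫ x in s N, P (T x) ∂μ ≤ ∫ x, P (T x) ∂μ := by
      apply setIntegral_le_integral hPTint
      filter_upwards with x using le_max_left 0 _
    have step4 : ∫ x, P (T x) ∂μ = ∫ x, P x ∂μ := by
      rw [← MeasureTheory.integral_map hT.measurable.aemeasurable hPmeas.aestronglyMeasurable,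
        hT.map_eq]
    have : 0 ≤ ∫ x in s N, (P x - P (T x)) ∂μ := by
      rw [integral_sub hPint.integrableOn hPTint.integrableOn, step2]
      linarith [step3.trans_eq step4]
    linarith
  have hten := MeasureTheory.tendsto_setIntegral_of_monotone hsmeas hsmono
    (hGs ▸ hfi.integrableOn : IntegrableOn f (⋃ N, s N) μ)
  rw [hGs]
  exact ge_of_tendsto' hten key

lemma birkhoffSum_measurable (hT : Measurable T) (hf : Measurable f) (n : ℕ) :
    Measurable (birkhoffSum T f n) :=
  Finset.measurable_sum _ fun i _ => hf.comp (hT.iterate i)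

lemma birkhoffSum_sub_const (T : α → α) (f : α → ℝ) (a : ℝ) (n : ℕ) (x : α) :
    birkhoffSum T (fun y => f y - a) n x = birkhoffSum T f n x - n * a := by
  simp [birkhoffSum, Finset.sum_sub_distrib, Finset.sum_const, nsmul_eq_mul]

lemma birkhoffSum_const_sub (T : α → α) (f : α → ℝ) (a : ℝ) (n : ℕ) (x : α) :
    birkhoffSum T (fun y => a - f y) n x = n * a - birkhoffSum T f n x := by
  simp [birkhoffSum, Finset.sum_sub_distrib, Finset.sum_const, nsmul_eq_mul]

/-- If `∫ f dμ < 0` and `T` is ergodic, then a.e. the Birkhoff sums of `f` are bounded above. -/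
lemma birkhoffSum_bddAbove (hT : MeasurePreserving T μ μ)
    (herg : ∀ s : Set α, MeasurableSet s → T ⁻¹' s = s → μ s = 0 ∨ μ s = 1)
    (hf : Measurable f) (hfi : Integrable f μ) (hneg : ∫ x, f x ∂μ < 0) :
    ∀ᵐ x ∂μ, ∃ C : ℝ, ∀ n, birkhoffSum T f n x ≤ C := by
  set A : Set α := {x | ∀ k : ℕ, ∃ n, (k : ℝ) < birkhoffSum T f n x} with hA
  have hAmeas : MeasurableSet A := by
    have : A = ⋂ (k : ℕ), ⋃ n, {x | (k : ℝ) < birkhoffSum T f n x} := by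
      ext x; simp [hA]
    rw [this]
    exact MeasurableSet.iInter fun k => MeasurableSet.iUnion fun n =>
      measurableSet_lt measurable_const (birkhoffSum_measurable hT.measurable hf n)
  have hSTx : ∀ n x, birkhoffSum T f n (T x) = birkhoffSum T f (n + 1) x - f x := by
    intro n x
    rw [birkhoffSum_succ']
    ring
  have hAinv : T ⁻¹' A = A := by
    ext x
    simp only [Set.mem_preimage, hA, Set.mem_setOf_eq]
    constructor
    · intro h k
      obtain ⟨k', hk'⟩ := exists_nat_ge ((k : ℝ) - f x)
      obtain ⟨n, hn⟩ := h k'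
      rw [hSTx] at hn
      exact ⟨n + 1, by linarith⟩
    · intro h k
      obtain ⟨k', hk'⟩ := exists_nat_ge ((k : ℝ) + f x)
      obtain ⟨n, hn⟩ := h k'
      rcases n with - | n
      · rw [birkhoffSum_zero] at hn
        have : (0:ℝ) ≤ (k' : ℝ) := Nat.cast_nonneg _
        linarith
      · refine ⟨n, ?_⟩
        rw [hSTx]
        linarith
  rcases herg A hAmeas hAinv with h0 | h1
  · -- μ A = 0 : a.e. x ∉ A, which gives the bound
    have : ∀ᵐ x ∂μ, x ∉ A := by
      rw [ae_iff]
      simpa using h0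
    filter_upwards [this] with x hx
    simp only [hA, Set.mem_setOf_eq, not_forall, not_exists, not_lt] at hx
    obtain ⟨k, hk⟩ := hx
    exact ⟨k, hk⟩
  · -- μ A = 1 : contradiction with the maximal ergodic theorem
    exfalso
    have hiter : ∀ (i : ℕ) (x : α), T^[i] x ∈ A ↔ x ∈ A := by
      intro i
      induction i with
      | zero => intro x; rfl
      | succ i ih =>
        intro x
        rw [Function.iterate_succ_apply]
        rw [ih (T x)]
        exact Set.ext_iff.1 hAinv x
    set h : α → ℝ := A.indicator f with hh
    have hhmeas : Measurable h := hf.indicator hAmeas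
    have hhint : Integrable h μ := hfi.indicator hAmeas
    have hsum : ∀ n x, x ∈ A → birkhoffSum T h n x = birkhoffSum T f n x := by
      intro n x hx
      refine Finset.sum_congr rfl fun i _ => ?_
      rw [hh, Set.indicator_of_mem ((hiter i x).2 hx)]
    have hsum0 : ∀ n x, x ∉ A → birkhoffSum T h n x = 0 := by
      intro n x hx
      refine Finset.sum_eq_zero fun i _ => ?_
      rw [hh, Set.indicator_of_notMem (fun hmem => hx ((hiter i x).1 hmem))]
    have hGh : {x | ∃ n, 0 < birkhoffSum T h n x} = A := by
      ext x
      constructor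
      · rintro ⟨n, hn⟩
        by_contra hx
        rw [hsum0 n x hx] at hn
        exact lt_irrefl _ hn
      · intro hx
        obtain ⟨n, hn⟩ := hx 0
        exact ⟨n, by rw [hsum n x hx]; exact_mod_cast lt_of_le_of_lt (by norm_num) hn⟩
    have hmax := maximal_ergodic hT hhmeas hhint
    rw [hGh] at hmax
    have h2 : ∫ x in A, h x ∂μ = ∫ x in A, f x ∂μ :=
      setIntegral_congr_fun hAmeas fun x hx => Set.indicator_of_mem hx f
    have hcompl : μ Aᶜ = 0 := by
      rw [measure_compl hAmeas (measure_ne_top μ A), h1, measure_univ, tsub_self]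
    have h3 : ∫ x in A, f x ∂μ = ∫ x, f x ∂μ := by
      rw [← integral_indicator hAmeas]
      refine integral_congr_ae ?_
      filter_upwards [measure_eq_zero_iff_ae_notMem.1 hcompl] with x hx
      rw [Set.indicator_of_mem (by simpa using hx : x ∈ A)]
    rw [h2, h3] at hmax
    linarith

/-- Birkhoff's pointwise ergodic theorem, ergodic case. -/
theorem birkhoff_ergodic (hT : MeasurePreserving T μ μ)
    (herg : ∀ s : Set α, MeasurableSet s → T ⁻¹' s = s → μ s = 0 ∨ μ s = 1)
    (hf : Measurable f) (hfi : Integrable f μ) :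
    ∀ᵐ x ∂μ, Tendsto (fun n => birkhoffAverage ℝ T f n x) atTop (𝓝 (∫ x, f x ∂μ)) := by
  set c := ∫ x, f x ∂μ with hc
  have hint_const : ∀ a : ℝ, ∫ _ : α, a ∂μ = a := by
    intro a; simp
  have upper : ∀ k : ℕ, ∀ᵐ x ∂μ, ∃ C : ℝ, ∀ n,
      birkhoffSum T f n x - n * (c + 1 / (k + 1)) ≤ C := by
    intro k
    have hpos : (0:ℝ) < 1 / (k + 1) := by positivity
    have := birkhoffSum_bddAbove (f := fun y => f y - (c + 1 / (k + 1))) hT herg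
      (hf.sub measurable_const) (hfi.sub (integrable_const _))
      (by rw [integral_sub hfi (integrable_const _), hint_const, ← hc]; linarith)
    filter_upwards [this] with x hx
    obtain ⟨C, hC⟩ := hx
    exact ⟨C, fun n => by have := hC n; rwa [birkhoffSum_sub_const] at this⟩
  have lower : ∀ k : ℕ, ∀ᵐ x ∂μ, ∃ C : ℝ, ∀ n,
      n * (c - 1 / (k + 1)) - birkhoffSum T f n x ≤ C := by
    intro k
    have hpos : (0:ℝ) < 1 / (k + 1) := by positivity
    have := birkhoffSum_bddAbove (f := fun y => (c - 1 / (k + 1)) - f y) hT herg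
      (measurable_const.sub hf) ((integrable_const _).sub hfi)
      (by rw [integral_sub (integrable_const _) hfi, hint_const, ← hc]; linarith)
    filter_upwards [this] with x hx
    obtain ⟨C, hC⟩ := hx
    exact ⟨C, fun n => by have := hC n; rwa [birkhoffSum_const_sub] at this⟩
  filter_upwards [ae_all_iff.2 upper, ae_all_iff.2 lower] with x hu hl
  rw [Metric.tendsto_atTop]
  intro r hr
  obtain ⟨k, hk⟩ := exists_nat_one_div_lt (show (0:ℝ) < r / 2 by linarith)
  set ε := 1 / ((k : ℝ) + 1) with hε
  have hεpos : (0:ℝ) < ε := by positivity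
  obtain ⟨C₁, hC₁⟩ := hu k
  obtain ⟨C₂, hC₂⟩ := hl k
  set D := max (max C₁ C₂) 0 with hD
  have hD0 : 0 ≤ D := le_max_right _ _
  have hη : (0:ℝ) < r / 2 - ε := by linarith
  obtain ⟨N₀, hN₀⟩ := exists_nat_gt (D / (r / 2 - ε))
  refine ⟨N₀ + 1, fun n hn => ?_⟩
  have hn1 : 1 ≤ n := le_trans (Nat.le_add_left 1 N₀) hn
  have hnpos : (0:ℝ) < n := by exact_mod_cast hn1
  have hnN : D / (r / 2 - ε) < (n : ℝ) :=
    hN₀.trans (by exact_mod_cast Nat.lt_of_lt_of_le (Nat.lt_succ_self N₀) hn)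
  have hDn : D / n < r / 2 - ε := by
    have h := (div_lt_iff₀ hη).1 hnN
    rw [div_lt_iff₀ hnpos]
    linarith [mul_comm ((n:ℝ)) (r / 2 - ε)]
  rw [Real.dist_eq, abs_sub_lt_iff]
  have havg : birkhoffAverage ℝ T f n x = (n : ℝ)⁻¹ * birkhoffSum T f n x := rfl
  have hub : birkhoffSum T f n x ≤ C₁ + n * (c + ε) := by have := hC₁ n; linarith
  have hlb : n * (c - ε) - C₂ ≤ birkhoffSum T f n x := by have := hC₂ n; linarith
  have hC₁D : C₁ ≤ D := le_trans (le_max_left _ _) (le_max_left _ _)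
  have hC₂D : C₂ ≤ D := le_trans (le_max_right _ _) (le_max_left _ _)
  have hd1 : C₁ / (n:ℝ) ≤ D / n := by gcongr
  have hd2 : C₂ / (n:ℝ) ≤ D / n := by gcongr
  constructor
  · have h1 : (n:ℝ)⁻¹ * birkhoffSum T f n x ≤ (n:ℝ)⁻¹ * (C₁ + n * (c + ε)) :=
      mul_le_mul_of_nonneg_left hub (inv_pos.2 hnpos).le
    have h2 : (n:ℝ)⁻¹ * (C₁ + n * (c + ε)) = C₁ / n + (c + ε) := by field_simp
    rw [havg]
    linarith
  · have h1 : (n:ℝ)⁻¹ * (n * (c - ε) - C₂) ≤ (n:ℝ)⁻¹ * birkhoffSum T f n x :=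
      mul_le_mul_of_nonneg_left hlb (inv_pos.2 hnpos).le
    have h2 : (n:ℝ)⁻¹ * (n * (c - ε) - C₂) = (c - ε) - C₂ / n := by field_simp
    rw [havg]
    linarith

end Birkhoff

section Application

variable {E : Type*} [MeasurableSpace E]

lemma measurable_shift : Measurable (shift (E := E)) :=
  measurable_pi_lambda _ fun n => measurable_pi_apply (n + 1)

lemma shift_iterate_apply (i k : ℕ) (ω : ℕ → E) : shift^[i] ω k = ω (k + i) := by
  induction i generalizing k ω with
  | zero => simp
  | succ i ih =>
    rw [Function.iterate_succ_apply, ih]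
    rfl

lemma birkhoffSum_shift (g : E → ℝ) (n : ℕ) (ω : ℕ → E) :
    birkhoffSum shift (fun ω' => g (ω' 0)) n ω = ∑ i ∈ Finset.range n, g (ω i) :=
  Finset.sum_congr rfl fun i _ => by
    show g (shift^[i] ω 0) = g (ω i)
    rw [shift_iterate_apply]
    norm_num

lemma ennreal_inv_succ_eq (n : ℕ) :
    ((n : ℝ≥0∞) + 1)⁻¹ = ENNReal.ofReal (((n + 1 : ℕ) : ℝ))⁻¹ := by
  rw [ENNReal.ofReal_inv_of_pos (by positivity), ENNReal.ofReal_natCast]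
  push_cast
  ring_nf

lemma integrable_dirac_of_measurable [MeasurableSingletonClass E] {g : E → ℝ}
    (hg : Measurable g) (a : E) : Integrable g (Measure.dirac a) := by
  refine ⟨hg.aestronglyMeasurable, ?_⟩
  simp [HasFiniteIntegral, lintegral_dirac]

lemma integral_empMeasure [MeasurableSingletonClass E] {g : E → ℝ} (hg : Measurable g)
    (n : ℕ) (ω : ℕ → E) :
    ∫ x, g x ∂(empMeasure E n ω) = birkhoffAverage ℝ shift (fun ω' => g (ω' 0)) (n + 1) ω := by
  rw [empMeasure, integral_smul_measure,
    integral_finset_sum_measure (fun i _ => integrable_dirac_of_measurable hg _)]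
  simp only [integral_dirac]
  rw [birkhoffAverage, birkhoffSum_shift]
  congr 1
  rw [ennreal_inv_succ_eq, ENNReal.toReal_ofReal (by positivity)]

lemma empMeasure_apply {B : Set E} (hB : MeasurableSet B) (n : ℕ) (ω : ℕ → E) :
    empMeasure E n ω B = ENNReal.ofReal
      (birkhoffAverage ℝ shift (fun ω' => B.indicator (fun _ => (1:ℝ)) (ω' 0)) (n + 1) ω) := by
  rw [empMeasure, Measure.smul_apply, Measure.finset_sum_apply, birkhoffAverage,
    birkhoffSum_shift]
  have h1 : ∀ i, (Measure.dirac (ω i)) B = ENNReal.ofReal (B.indicator (fun _ => (1:ℝ)) (ω i)) := by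
    intro i
    rw [Measure.dirac_apply' _ hB]
    by_cases h : ω i ∈ B <;> simp [h]
  simp only [h1]
  rw [← ENNReal.ofReal_sum_of_nonneg
      (fun i _ => Set.indicator_nonneg (fun _ _ => by norm_num) _),
    smul_eq_mul, ennreal_inv_succ_eq, ← ENNReal.ofReal_mul (by positivity)]
  rfl

end Application

/-- If the coordinate sequence `ξ = (ξ₁, ξ₂, …)` on `Ω = E^ℕ` is stationary, the law of `ξ₁`
integrates the gauge `ψ`, and `ξ` is ergodic (every shift-invariant set has probability `0`
or `1`), then `ℙ`-almost surely the empirical measures `m_n` converge to `μ = ℙ∘ξ₁⁻¹` in the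
`ψ`-weak topology (equivalently, `d_ψ(m_n, μ) → 0`), as `n → ∞`. -/
theorem empirical_tendsto_psiWeak_of_ergodic (E : Type*) [MetricSpace E] [PolishSpace E]
    [MeasurableSpace E] [BorelSpace E]
    (ψ : E → ℝ) (hψc : Continuous ψ) (hψ1 : ∀ x, 1 ≤ ψ x)
    (ℙ : Measure (ℕ → E)) [IsProbabilityMeasure ℙ]
    (hstat : ℙ.map shift = ℙ)
    (hint : Integrable ψ (ℙ.map fun ω => ω 0))
    (hergodic : ∀ I : Set (ℕ → E), MeasurableSet[shiftInvariantSigma E] I →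
      ℙ I = 0 ∨ ℙ I = 1) :
    ∀ᵐ ω ∂ℙ, Filter.Tendsto (fun n => dPsi ψ (empMeasure E n ω) (ℙ.map fun ω' => ω' 0))
      Filter.atTop (nhds 0) := by
  classical
  set μ : Measure E := ℙ.map (fun ω => ω 0) with hμdef
  have heval : Measurable (fun ω : ℕ → E => ω 0) := measurable_pi_apply 0
  haveI : IsProbabilityMeasure μ := Measure.isProbabilityMeasure_map heval.aemeasurable
  have hMP : MeasurePreserving shift ℙ ℙ := ⟨measurable_shift, hstat⟩
  have herg' : ∀ s : Set (ℕ → E), MeasurableSet s → shift ⁻¹' s = s → ℙ s = 0 ∨ ℙ s = 1 :=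
    fun s hs hinv => hergodic s ⟨hs, hinv⟩
  -- Birkhoff's theorem for functions of the first coordinate
  have key : ∀ g : E → ℝ, Measurable g → Integrable g μ →
      ∀ᵐ ω ∂ℙ, Tendsto (fun n => birkhoffAverage ℝ shift (fun ω' => g (ω' 0)) (n + 1) ω)
        atTop (𝓝 (∫ x, g x ∂μ)) := by
    intro g hg hgi
    have hgm : Measurable (fun ω : ℕ → E => g (ω 0)) := hg.comp heval
    have hcomp : Integrable (fun ω : ℕ → E => g (ω 0)) ℙ :=
      (integrable_map_measure hg.aestronglyMeasurable heval.aemeasurable).1 hgi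
    have hbk := birkhoff_ergodic hMP herg' hgm hcomp
    have hI : ∫ ω, g (ω 0) ∂ℙ = ∫ x, g x ∂μ :=
      (integral_map heval.aemeasurable hg.aestronglyMeasurable).symm
    rw [hI] at hbk
    filter_upwards [hbk] with ω hω
    exact hω.comp (tendsto_add_atTop_nat 1)
  -- Part A : convergence of the ψ-integrals
  have hA : ∀ᵐ ω ∂ℙ, Tendsto (fun n => ∫ x, ψ x ∂(empMeasure E n ω)) atTop
      (𝓝 (∫ x, ψ x ∂μ)) := by
    filter_upwards [key ψ hψc.measurable hint] with ω hω
    have heq : (fun n => ∫ x, ψ x ∂(empMeasure E n ω)) =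
        fun n => birkhoffAverage ℝ shift (fun ω' => ψ (ω' 0)) (n + 1) ω :=
      funext fun n => integral_empMeasure hψc.measurable n ω
    rw [heq]
    exact hω
  -- E is nonempty
  rcases isEmpty_or_nonempty E with hE | hE
  · haveI : IsEmpty (ℕ → E) := ⟨fun f => hE.false (f 0)⟩
    have h0 : (Set.univ : Set (ℕ → E)) = ∅ := Set.univ_eq_empty_iff.2 inferInstance
    have h1 : (1 : ℝ≥0∞) = 0 := by rw [← measure_univ (μ := ℙ), h0, measure_empty]
    exact absurd h1 (by norm_num)
  obtain ⟨x, hx⟩ := TopologicalSpace.exists_dense_seq E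
  have hδpos : ∀ k : ℕ, (0:ℝ) < 1 / (k + 1) := fun k => by positivity
  -- disjointified cover by balls of radius 1/(k+1)
  set D : ℕ → ℕ → Set E := fun k j =>
    Metric.ball (x j) (1 / (k + 1)) \ ⋃ (i : ℕ) (_ : i < j), Metric.ball (x i) (1 / (k + 1))
    with hDdef
  have hDmeas : ∀ k j, MeasurableSet (D k j) := fun k j =>
    measurableSet_ball.diff
      (MeasurableSet.iUnion fun i => MeasurableSet.iUnion fun _ => measurableSet_ball)
  have hDball : ∀ k j, D k j ⊆ Metric.ball (x j) (1 / (k + 1)) := fun k j => Set.diff_subset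
  have hDdisj : ∀ k, ∀ i j : ℕ, i ≠ j → Disjoint (D k i) (D k j) := by
    intro k i j hij
    wlog h : i < j generalizing i j
    · exact (this j i hij.symm (by omega)).symm
    rw [Set.disjoint_left]
    intro a hai haj
    exact haj.2 (Set.mem_iUnion.2 ⟨i, Set.mem_iUnion.2 ⟨h, hai.1⟩⟩)
  have hDcover : ∀ k, (⋃ j, D k j) = Set.univ := by
    intro k
    ext y
    simp only [Set.mem_iUnion, Set.mem_univ, iff_true]
    have hex : ∃ j, y ∈ Metric.ball (x j) (1 / (k + 1)) := by
      obtain ⟨j, hj⟩ := hx.exists_dist_lt y (hδpos k)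
      exact ⟨j, by rwa [Metric.mem_ball]⟩
    refine ⟨Nat.find hex, ⟨Nat.find_spec hex, ?_⟩⟩
    simp only [Set.mem_iUnion, not_exists]
    exact fun i hi => Nat.find_min hex hi
  -- choose a finite part of the cover carrying almost all of μ
  have hmex : ∀ k : ℕ, ∃ m : ℕ,
      1 - ENNReal.ofReal (1 / (k + 1)) < μ (⋃ j ∈ Finset.range m, D k j) := by
    intro k
    have hmono : Monotone (fun m : ℕ => ⋃ j ∈ Finset.range m, D k j) := by
      intro a b hab
      refine Set.biUnion_subset_biUnion_left ?_
      intro j hj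
      exact Finset.mem_range.2 (lt_of_lt_of_le (Finset.mem_range.1 hj) hab)
    have hun : (⋃ m : ℕ, ⋃ j ∈ Finset.range m, D k j) = Set.univ := by
      rw [← hDcover k]
      apply Set.Subset.antisymm
      · exact Set.iUnion_subset fun mm => Set.iUnion₂_subset fun j _ => Set.subset_iUnion _ j
      · exact Set.iUnion_subset fun j => Set.subset_iUnion_of_subset (j + 1)
          (Set.subset_biUnion_of_mem (Finset.mem_range.2 (Nat.lt_succ_self j)))
    have htend := tendsto_measure_iUnion_atTop (μ := μ) hmono
    rw [hun, measure_univ] at htend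
    have hlt : 1 - ENNReal.ofReal (1 / (k + 1)) < 1 :=
      ENNReal.sub_lt_self ENNReal.one_ne_top one_ne_zero
        (ENNReal.ofReal_pos.2 (hδpos k)).ne'
    exact (htend.eventually (eventually_gt_nhds hlt)).exists
  choose m hm using hmex
  set R : ℕ → Set E := fun k => (⋃ j ∈ Finset.range (m k), D k j)ᶜ with hRdef
  have hUmeas : ∀ k, MeasurableSet (⋃ j ∈ Finset.range (m k), D k j) := fun k =>
    (Finset.range (m k)).measurableSet_biUnion fun j _ => hDmeas k j
  have hRmeas : ∀ k, MeasurableSet (R k) := fun k => (hUmeas k).compl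
  have hμR : ∀ k, μ (R k) ≤ ENNReal.ofReal (1 / (k + 1)) := by
    intro k
    rw [hRdef]
    simp only []
    rw [prob_compl_eq_one_sub (hUmeas k), tsub_le_iff_right]
    rcases le_total 1 (ENNReal.ofReal (1 / ((k:ℝ) + 1))) with h | h
    · exact le_add_right h
    · have h2 := (ENNReal.sub_lt_iff_lt_right ENNReal.ofReal_ne_top h).1 (hm k)
      rw [add_comm] at h2
      exact h2.le
  -- convergence of empirical masses of measurable sets
  have hsetconv : ∀ B : Set E, MeasurableSet B → ∀ᵐ ω ∂ℙ,
      Tendsto (fun n => birkhoffAverage ℝ shift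
        (fun ω' => B.indicator (fun _ => (1:ℝ)) (ω' 0)) (n + 1) ω)
        atTop (𝓝 (μ B).toReal) := by
    intro B hB
    have hmeas : Measurable (B.indicator (fun _ => (1:ℝ))) := measurable_const.indicator hB
    have hint' : Integrable (B.indicator (fun _ => (1:ℝ))) μ := (integrable_const 1).indicator hB
    have h := key _ hmeas hint'
    rwa [integral_indicator_const (1:ℝ) hB, smul_eq_mul, mul_one] at h
  have h1 : ∀ᵐ ω ∂ℙ, ∀ k j : ℕ, j < m k →
      Tendsto (fun n => birkhoffAverage ℝ shift
        (fun ω' => (D k j).indicator (fun _ => (1:ℝ)) (ω' 0)) (n + 1) ω)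
        atTop (𝓝 (μ (D k j)).toReal) := by
    rw [ae_all_iff]
    intro k
    rw [ae_all_iff]
    intro j
    by_cases hj : j < m k
    · filter_upwards [hsetconv (D k j) (hDmeas k j)] with ω hω _
      exact hω
    · filter_upwards with ω hj' using absurd hj' hj
  have h2 : ∀ᵐ ω ∂ℙ, ∀ k : ℕ,
      Tendsto (fun n => birkhoffAverage ℝ shift
        (fun ω' => (R k).indicator (fun _ => (1:ℝ)) (ω' 0)) (n + 1) ω)
        atTop (𝓝 (μ (R k)).toReal) :=
    ae_all_iff.2 fun k => hsetconv (R k) (hRmeas k)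
  filter_upwards [hA, h1, h2] with ω hωA hω1 hω2
  -- the ψ-part tends to 0
  have hQ : Tendsto (fun n => |(∫ x, ψ x ∂(empMeasure E n ω)) - ∫ x, ψ x ∂μ|) atTop (𝓝 0) := by
    have := (hωA.sub (tendsto_const_nhds (x := ∫ x, ψ x ∂μ))).abs
    simpa using this
  -- the Prohorov part tends to 0
  have hP : Tendsto (fun n => prohorovDist (empMeasure E n ω) μ) atTop (𝓝 0) := by
    rw [Metric.tendsto_atTop]
    intro r hr
    obtain ⟨k, hk⟩ := exists_nat_one_div_lt (show (0:ℝ) < r / 4 by linarith)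
    set δ : ℝ := 1 / ((k:ℝ) + 1) with hδdef
    have hδp : 0 < δ := hδpos k
    set η : ℝ := δ / (m k + 1) with hηdef
    have hηpos : 0 < η := by positivity
    have hev1 : ∀ᶠ n in atTop, ∀ j ∈ Finset.range (m k),
        empMeasure E n ω (D k j) ≤ μ (D k j) + ENNReal.ofReal η := by
      rw [Finset.eventually_all]
      intro j hj
      have hTj := hω1 k j (Finset.mem_range.1 hj)
      filter_upwards [hTj.eventually_lt_const (lt_add_of_pos_right _ hηpos)] with n hn
      rw [empMeasure_apply (hDmeas k j)]
      calc ENNReal.ofReal _ ≤ ENNReal.ofReal ((μ (D k j)).toReal + η) :=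
            ENNReal.ofReal_le_ofReal hn.le
      _ = μ (D k j) + ENNReal.ofReal η := by
          rw [ENNReal.ofReal_add ENNReal.toReal_nonneg hηpos.le,
            ENNReal.ofReal_toReal (measure_ne_top μ _)]
    have hev2 : ∀ᶠ n in atTop,
        empMeasure E n ω (R k) ≤ ENNReal.ofReal δ + ENNReal.ofReal δ := by
      filter_upwards [(hω2 k).eventually_lt_const (lt_add_of_pos_right _ hδp)] with n hn
      rw [empMeasure_apply (hRmeas k)]
      calc ENNReal.ofReal _ ≤ ENNReal.ofReal ((μ (R k)).toReal + δ) :=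
            ENNReal.ofReal_le_ofReal hn.le
      _ = μ (R k) + ENNReal.ofReal δ := by
          rw [ENNReal.ofReal_add ENNReal.toReal_nonneg hδp.le,
            ENNReal.ofReal_toReal (measure_ne_top μ _)]
      _ ≤ ENNReal.ofReal δ + ENNReal.ofReal δ := add_le_add_left (hμR k) _
    obtain ⟨N, hN⟩ := eventually_atTop.1 (hev1.and hev2)
    refine ⟨N, fun n hn => ?_⟩
    obtain ⟨hn1, hn2⟩ := hN n hn
    have hmem : (3 * δ) ∈ {ε : ℝ | 0 < ε ∧ ∀ B : Set E, MeasurableSet B →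
        empMeasure E n ω B ≤ μ (Metric.thickening ε B) + ENNReal.ofReal ε} := by
      refine ⟨by positivity, fun B hB => ?_⟩
      set S : Finset ℕ := (Finset.range (m k)).filter (fun j => (D k j ∩ B).Nonempty) with hSdef
      have hcov : B ⊆ (⋃ j ∈ S, D k j) ∪ R k := by
        intro y hy
        by_cases hyR : y ∈ R k
        · exact Or.inr hyR
        · have hyU : y ∈ ⋃ j ∈ Finset.range (m k), D k j := by
            by_contra h
            exact hyR h
          obtain ⟨j, hj, hyD⟩ := Set.mem_iUnion₂.1 hyU
          exact Or.inl (Set.mem_iUnion₂.2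
            ⟨j, Finset.mem_filter.2 ⟨hj, ⟨y, hyD, hy⟩⟩, hyD⟩)
      have hthick : (⋃ j ∈ S, D k j) ⊆ Metric.thickening (3 * δ) B := by
        refine Set.iUnion₂_subset fun j hj => ?_
        obtain ⟨z, hzD, hzB⟩ := (Finset.mem_filter.1 hj).2
        intro y hyD
        rw [Metric.mem_thickening_iff]
        refine ⟨z, hzB, ?_⟩
        have hd1 : dist y (x j) < δ := Metric.mem_ball.1 (hDball k j hyD)
        have hd2 : dist z (x j) < δ := Metric.mem_ball.1 (hDball k j hzD)
        calc dist y z ≤ dist y (x j) + dist z (x j) := dist_triangle_right _ _ _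
        _ < δ + δ := add_lt_add hd1 hd2
        _ ≤ 3 * δ := by linarith
      have hcard : (S.card : ℝ≥0∞) * ENNReal.ofReal η ≤ ENNReal.ofReal δ := by
        have hc1 : (S.card : ℝ≥0∞) ≤ ((m k + 1 : ℕ) : ℝ≥0∞) := by
          exact_mod_cast Nat.cast_le.2 ((Finset.card_filter_le _ _).trans
            ((Finset.card_range (m k)).le.trans (Nat.le_succ _)))
        calc (S.card : ℝ≥0∞) * ENNReal.ofReal η
            ≤ ((m k + 1 : ℕ) : ℝ≥0∞) * ENNReal.ofReal η := mul_le_mul_left hc1 _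
        _ = ENNReal.ofReal (((m k + 1 : ℕ) : ℝ) * η) := by
            rw [ENNReal.ofReal_mul (by positivity), ENNReal.ofReal_natCast]
        _ = ENNReal.ofReal δ := by
            congr 1
            rw [hηdef]
            field_simp
            push_cast
            rfl
      calc empMeasure E n ω B ≤ empMeasure E n ω ((⋃ j ∈ S, D k j) ∪ R k) := measure_mono hcov
      _ ≤ empMeasure E n ω (⋃ j ∈ S, D k j) + empMeasure E n ω (R k) := measure_union_le _ _
      _ ≤ (∑ j ∈ S, empMeasure E n ω (D k j)) + (ENNReal.ofReal δ + ENNReal.ofReal δ) :=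
          add_le_add (measure_biUnion_finset_le _ _) hn2
      _ ≤ (∑ j ∈ S, (μ (D k j) + ENNReal.ofReal η)) + (ENNReal.ofReal δ + ENNReal.ofReal δ) :=
          add_le_add_left (Finset.sum_le_sum fun j hj =>
            hn1 j (Finset.mem_filter.1 hj).1) _
      _ = (μ (⋃ j ∈ S, D k j) + (S.card : ℝ≥0∞) * ENNReal.ofReal η)
            + (ENNReal.ofReal δ + ENNReal.ofReal δ) := by
          rw [Finset.sum_add_distrib, Finset.sum_const, nsmul_eq_mul,
            measure_biUnion_finset (fun i _ j _ hij => hDdisj k i j hij)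
              (fun j _ => hDmeas k j)]
      _ ≤ (μ (Metric.thickening (3 * δ) B) + ENNReal.ofReal δ)
            + (ENNReal.ofReal δ + ENNReal.ofReal δ) :=
          add_le_add_left (add_le_add (measure_mono hthick) hcard) _
      _ = μ (Metric.thickening (3 * δ) B) + ENNReal.ofReal (3 * δ) := by
          rw [add_assoc]
          congr 1
          rw [← ENNReal.ofReal_add hδp.le hδp.le, ← ENNReal.ofReal_add hδp.le (by positivity)]
          congr 1
          ring
    have hub : prohorovDist (empMeasure E n ω) μ ≤ 3 * δ :=
      csInf_le ⟨0, fun y hy => hy.1.le⟩ hmem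
    have hlb : 0 ≤ prohorovDist (empMeasure E n ω) μ :=
      le_csInf ⟨_, hmem⟩ fun y hy => hy.1.le
    rw [Real.dist_eq, sub_zero, abs_of_nonneg hlb]
    have h3δ : 3 * δ < r := by
      rw [hδdef]
      linarith
    linarith
  have := hP.add hQ
  simp only [add_zero] at this
  simp only [dPsi]
  exact this
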